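/- Let F : ℝ⁵ → ℂ be differentiable, σ > 0, and for each b in a finite index set let c_b ∈ ℂ with ‖c_b‖ = 1 and μ_b = c_b • F. Then at every point θ, the total Fisher information matrix J = Σ_b (2/σ²)·Re( conj(∂μ_b/∂θ_i(θ)) · ∂μ_b/∂θ_j(θ) ) has rank at most 2; in particular J is a singular (non-invertible) 5×5 matrix, regardless of the number of antennas. -/

import Mathlib

theorem stmt13 (B : Type*) [Fintype B]
    (F : (Fin 5 → ℝ) → ℂ) (hF : Differentiable ℝ F)
    (σ : ℝ) (hσ : σ > 0)
    (c : B → ℂ) (hc : ∀ b, ‖c b‖ = 1)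
    (μ : B → (Fin 5 → ℝ) → ℂ) (hμ : ∀ b, μ b = c b • F)
    (θ : Fin 5 → ℝ)
    (J : Matrix (Fin 5) (Fin 5) ℝ)
    (hJ : ∀ i j, J i j = ∑ b, (2 / σ ^ 2) *
      ((starRingEnd ℂ) (fderiv ℝ (μ b) θ (Pi.single i 1)) *
        fderiv ℝ (μ b) θ (Pi.single j 1)).re) :
    J.rank ≤ 2 ∧ ¬ IsUnit J := by
  -- derivative of each μ b
  have hder : ∀ b, fderiv ℝ (μ b) θ = c b • fderiv ℝ F θ := by
    intro b
    rw [hμ b]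
    exact fderiv_const_smul (hF θ) (c b)
  set u : Fin 5 → ℂ := fun i => fderiv ℝ F θ (Pi.single i 1) with hu
  have hcc : ∀ b, (starRingEnd ℂ) (c b) * c b = 1 := by
    intro b
    rw [Complex.conj_mul']
    norm_cast
    rw [hc b]; norm_num
  set a : ℝ := Real.sqrt ((Fintype.card B : ℝ) * (2 / σ ^ 2)) with ha
  have ha2 : a * a = (Fintype.card B : ℝ) * (2 / σ ^ 2) := by
    exact Real.mul_self_sqrt (by positivity)
  -- explicit entries of J
  have hJ' : ∀ i j, J i j =
      (a * (u i).re) * (a * (u j).re) + (a * (u i).im) * (a * (u j).im) := by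
    intro i j
    rw [hJ i j]
    have : ∀ b : B, (2 / σ ^ 2) *
        ((starRingEnd ℂ) (fderiv ℝ (μ b) θ (Pi.single i 1)) *
          fderiv ℝ (μ b) θ (Pi.single j 1)).re
        = (2 / σ ^ 2) * ((u i).re * (u j).re + (u i).im * (u j).im) := by
      intro b
      rw [hder b]
      simp only [ContinuousLinearMap.smul_apply, smul_eq_mul, map_mul]
      congr 1
      have : (starRingEnd ℂ) (c b) * (starRingEnd ℂ) (u i) * (c b * u j)
          = ((starRingEnd ℂ) (c b) * c b) * ((starRingEnd ℂ) (u i) * u j) := by ring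
      rw [this, hcc b, one_mul, Complex.mul_re, Complex.conj_re, Complex.conj_im]
      ring
    rw [Finset.sum_congr rfl (fun b _ => this b), Finset.sum_const, nsmul_eq_mul]
    rw [Finset.card_univ]
    linear_combination (-((u i).re * (u j).re + (u i).im * (u j).im)) * ha2
  -- J = M * Mᵀ for a 5×2 matrix M
  set M : Matrix (Fin 5) (Fin 2) ℝ :=
    fun i k => if k = 0 then a * (u i).re else a * (u i).im with hM
  have hJM : J = M * M.transpose := by
    ext i j
    rw [Matrix.mul_apply, Fin.sum_univ_two, hJ' i j]
    simp [hM, Matrix.transpose_apply, Matrix.transpose]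
  have hrank : J.rank ≤ 2 := by
    rw [hJM]
    calc (M * M.transpose).rank ≤ M.transpose.rank := Matrix.rank_mul_le_right _ _
      _ ≤ Fintype.card (Fin 2) := Matrix.rank_le_card_height _
      _ = 2 := by simp
  refine ⟨hrank, fun hunit => ?_⟩
  have := Matrix.rank_of_isUnit J hunit
  rw [this] at hrank
  simp [Fintype.card_fin] at hrank
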